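/- The dihedral group Dih_n (n ≥ 3) has exactly Σ_{d | n} (1 + d) subgroups, where the sum ranges over all positive divisors d of n. -/

import Mathlib

open DihedralGroup

namespace Stmt10Aux

variable {n : ℕ}

/-- The rotation part of a subgroup of the dihedral group. -/
def rotPart (H : Subgroup (DihedralGroup n)) : AddSubgroup (ZMod n) where
  carrier := {i | r i ∈ H}
  zero_mem' := H.one_mem
  add_mem' := fun {a b} ha hb => by simpa using H.mul_mem ha hb
  neg_mem' := fun {a} ha => by
    have h1 : (r a)⁻¹ = r (-a) := rfl
    have := H.inv_mem ha
    rwa [h1] at this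

@[simp] lemma mem_rotPart {H : Subgroup (DihedralGroup n)} {i : ZMod n} :
    i ∈ rotPart H ↔ r i ∈ H := Iff.rfl

/-- A subgroup of the dihedral group from a rotation subgroup and an optional coset. -/
def dihSub (K : AddSubgroup (ZMod n)) (o : Option (ZMod n ⧸ K)) :
    Subgroup (DihedralGroup n) where
  carrier := {g | match g with
    | .r i => i ∈ K
    | .sr j => o = some (QuotientAddGroup.mk j)}
  one_mem' := K.zero_mem
  mul_mem' := by
    rintro (a | a) (b | b) ha hb
    · exact K.add_mem ha hb
    · show o = some (QuotientAddGroup.mk (b - a))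
      have hb' : o = some (QuotientAddGroup.mk b) := hb
      rw [hb']
      congr 1
      rw [QuotientAddGroup.eq]
      have h2 : -b + (b - a) = -a := by ring
      rw [h2]
      exact K.neg_mem ha
    · show o = some (QuotientAddGroup.mk (a + b))
      have ha' : o = some (QuotientAddGroup.mk a) := ha
      rw [ha']
      congr 1
      rw [QuotientAddGroup.eq]
      have h2 : -a + (a + b) = b := by ring
      rw [h2]
      exact hb
    · show b - a ∈ K
      have ha' : o = some (QuotientAddGroup.mk a) := ha
      have hb' : o = some (QuotientAddGroup.mk b) := hb
      have : (QuotientAddGroup.mk a : ZMod n ⧸ K) = QuotientAddGroup.mk b := by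
        have := ha'.symm.trans hb'
        exact Option.some_injective _ this
      rw [QuotientAddGroup.eq] at this
      simpa [sub_eq_neg_add] using this
  inv_mem' := by
    rintro (a | a) ha
    · exact K.neg_mem ha
    · exact ha

@[simp] lemma r_mem_dihSub {K : AddSubgroup (ZMod n)} {o : Option (ZMod n ⧸ K)} {i : ZMod n} :
    r i ∈ dihSub K o ↔ i ∈ K := Iff.rfl

@[simp] lemma sr_mem_dihSub {K : AddSubgroup (ZMod n)} {o : Option (ZMod n ⧸ K)} {j : ZMod n} :
    sr j ∈ dihSub K o ↔ o = some (QuotientAddGroup.mk j) := Iff.rfl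

lemma rot_dihSub (K : AddSubgroup (ZMod n)) (o : Option (ZMod n ⧸ K)) :
    rotPart (dihSub K o) = K := by
  ext i; exact Iff.rfl

open scoped Classical in
/-- The fiber of `rotPart` over `K` is equivalent to `Option (ZMod n ⧸ K)`. -/
noncomputable def fiberEquiv (K : AddSubgroup (ZMod n)) :
    {H : Subgroup (DihedralGroup n) // rotPart H = K} ≃ Option (ZMod n ⧸ K) where
  toFun := fun H =>
    if h : ∃ j, sr j ∈ H.1 then some (QuotientAddGroup.mk h.choose) else none
  invFun o := ⟨dihSub K o, rot_dihSub K o⟩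
  left_inv := by
    rintro ⟨H, hH⟩
    subst hH
    apply Subtype.ext
    show dihSub _ _ = H
    ext g
    rcases g with i | j
    · simp
    · rw [sr_mem_dihSub]
      beta_reduce
      by_cases h : ∃ j', sr j' ∈ H
      · rw [dif_pos h]
        have hc : sr h.choose ∈ H := h.choose_spec
        constructor
        · intro he
          have hmk : (QuotientAddGroup.mk h.choose : ZMod n ⧸ rotPart H)
              = QuotientAddGroup.mk j := Option.some_injective _ he
          rw [QuotientAddGroup.eq] at hmk
          have hr : r (-h.choose + j) ∈ H := hmk
          have := H.mul_mem hc hr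
          simpa using this
        · intro hj
          have := H.mul_mem hc hj
          rw [sr_mul_sr] at this
          congr 1
          rw [QuotientAddGroup.eq]
          show r (-h.choose + j) ∈ H
          rwa [← sub_eq_neg_add]
      · rw [dif_neg h]
        simp only [false_iff, reduceCtorEq]
        intro hj; exact absurd ⟨j, hj⟩ h
  right_inv := by
    rintro (_ | c)
    · simp only
      rw [dif_neg]
      rintro ⟨j, hj⟩
      rw [sr_mem_dihSub] at hj
      exact Option.some_ne_none _ hj.symm
    · simp only
      have h : ∃ j, sr j ∈ dihSub K (some c) := by
        obtain ⟨j, hj⟩ := QuotientAddGroup.mk_surjective c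
        exact ⟨j, by rw [sr_mem_dihSub, hj]⟩
      rw [dif_pos h]
      have := h.choose_spec
      rw [sr_mem_dihSub] at this
      exact this.symm

/-- Subgroups of the dihedral group are classified. -/
noncomputable def mainEquiv (n : ℕ) :
    Subgroup (DihedralGroup n) ≃ Σ K : AddSubgroup (ZMod n), Option (ZMod n ⧸ K) :=
  (Equiv.sigmaFiberEquiv rotPart).symm.trans (Equiv.sigmaCongrRight fiberEquiv)

end Stmt10Aux
namespace Stmt10Aux

lemma card_zmult {n d : ℕ} (hn : n ≠ 0) (hd : d ∣ n) (hd0 : d ≠ 0) :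
    Nat.card (AddSubgroup.zmultiples ((n / d : ℕ) : ZMod n)) = d := by
  rw [Nat.card_zmultiples, ZMod.addOrderOf_coe _ hn,
    Nat.gcd_eq_right (Nat.div_dvd_of_dvd hd), Nat.div_div_self hd hn]

lemma card_dvd {n : ℕ} (K : AddSubgroup (ZMod n)) [NeZero n] : Nat.card K ∣ n := by
  have h := AddSubgroup.index_mul_card K
  rw [Nat.card_zmod] at h
  exact Dvd.intro_left _ h

lemma eq_zmultiples {n : ℕ} [NeZero n] (K : AddSubgroup (ZMod n)) :
    K = AddSubgroup.zmultiples ((n / Nat.card K : ℕ) : ZMod n) := by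
  have hn : n ≠ 0 := NeZero.ne n
  set d := Nat.card K with hd
  have hdvd : d ∣ n := card_dvd K
  have hd0 : d ≠ 0 := Nat.card_pos.ne'
  refine AddSubgroup.eq_of_le_of_card_ge ?_ ?_
  · intro x hx
    have h1 : d • (⟨x, hx⟩ : K) = 0 := by
      rw [hd]
      exact card_nsmul_eq_zero'
    have h1' : d • x = 0 := congrArg Subtype.val h1
    have hval : ((x.val : ℕ) : ZMod n) = x := ZMod.natCast_zmod_val x
    have h2 : ((d * x.val : ℕ) : ZMod n) = 0 := by
      push_cast
      rw [hval, ← nsmul_eq_mul]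
      exact h1'
    rw [ZMod.natCast_eq_zero_iff] at h2
    obtain ⟨m, hm⟩ : (n / d) ∣ x.val := by
      have hnd : d * (n / d) = n := Nat.mul_div_cancel' hdvd
      have h3 : d * (n / d) ∣ d * x.val := by rw [hnd]; exact h2
      exact (Nat.mul_dvd_mul_iff_left (Nat.pos_of_ne_zero hd0)).mp h3
    refine AddSubgroup.mem_zmultiples_iff.mpr ⟨(m : ℤ), ?_⟩
    rw [← hval, hm]
    push_cast
    rw [zsmul_eq_mul]
    push_cast
    ring
  · rw [card_zmult hn hdvd hd0]

lemma index_eq {n : ℕ} [NeZero n] (K : AddSubgroup (ZMod n)) :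
    K.index = n / Nat.card K := by
  have h := AddSubgroup.index_mul_card K
  rw [Nat.card_zmod] at h
  have hd0 : Nat.card K ≠ 0 := Nat.card_pos.ne'
  exact (Nat.div_eq_of_eq_mul_left (Nat.pos_of_ne_zero hd0) h.symm).symm
end Stmt10Aux

theorem stmt10 (n : ℕ) (hn : 3 ≤ n) :
    Nat.card (Subgroup (DihedralGroup n)) = ∑ d ∈ n.divisors, (1 + d) := by
  haveI : NeZero n := ⟨by omega⟩
  have hn0 : n ≠ 0 := by omega
  classical
  haveI : Finite (AddSubgroup (ZMod n)) :=
    Finite.of_injective (fun K : AddSubgroup (ZMod n) => (K : Set (ZMod n)))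
      SetLike.coe_injective
  haveI := Fintype.ofFinite (AddSubgroup (ZMod n))
  haveI instQ : ∀ K : AddSubgroup (ZMod n), Fintype (ZMod n ⧸ K) :=
    fun K => Fintype.ofFinite _
  rw [Nat.card_congr (Stmt10Aux.mainEquiv n), Nat.card_eq_fintype_card, Fintype.card_sigma]
  have hterm : ∀ K : AddSubgroup (ZMod n),
      Fintype.card (Option (ZMod n ⧸ K)) = 1 + K.index := by
    intro K
    rw [Fintype.card_option, AddSubgroup.index, Nat.card_eq_fintype_card, add_comm]
  rw [Finset.sum_congr rfl fun K _ => hterm K]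
  rw [← Nat.sum_div_divisors n (fun d => 1 + d)]
  refine Finset.sum_bij (fun K _ => Nat.card K) ?_ ?_ ?_ ?_
  · intro K _; exact Nat.mem_divisors.mpr ⟨Stmt10Aux.card_dvd K, hn0⟩
  · intro K1 _ K2 _ h
    rw [Stmt10Aux.eq_zmultiples K1, Stmt10Aux.eq_zmultiples K2, h]
  · intro d hd
    obtain ⟨hdvd, -⟩ := Nat.mem_divisors.mp hd
    have hd0 : d ≠ 0 := (Nat.pos_of_mem_divisors hd).ne'
    exact ⟨AddSubgroup.zmultiples ((n / d : ℕ) : ZMod n), Finset.mem_univ _,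
      Stmt10Aux.card_zmult hn0 hdvd hd0⟩
  · intro K _
    rw [Stmt10Aux.index_eq K]
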